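/- arXiv:math/0703915 — 2 statements merged into one kernel-verified Lean document; each statement's English description precedes it below -/
import Mathlib

section
/- Let f : ℝⁿ → ℝ be of class C¹ and let y : ℝ → ℝⁿ be a differentiable curve satisfying y'(t) = ∇f(y(t)) for all t. If y(0) = y(T) for some T > 0, then y is constant on the interval [0, T]. In particular, the gradient flow of f has no nonconstant periodic orbits. -/
open Set

/-- A gradient line of a `C¹` function `f : ℝⁿ → ℝ` which returns to its starting
point is constant on the corresponding time interval: the gradient flow has no
nonconstant periodic orbits. -/
theorem gradient_line_no_periodic_orbit {n : ℕ}
    (f : EuclideanSpace ℝ (Fin n) → ℝ) (hf : ContDiff ℝ 1 f)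
    (y : ℝ → EuclideanSpace ℝ (Fin n))
    (hy : ∀ t, HasDerivAt y (gradient f (y t)) t)
    (T : ℝ) (hT : 0 < T) (hper : y 0 = y T) :
    ∀ t ∈ Set.Icc (0 : ℝ) T, y t = y 0 := by
  set G : ℝ → EuclideanSpace ℝ (Fin n) := fun t => gradient f (y t) with hG
  -- g = f ∘ y has derivative ⟪G t, G t⟫
  have hg : ∀ t, HasDerivAt (f ∘ y) (inner ℝ (G t) (G t) : ℝ) t := by
    intro t
    have hdf : HasGradientAt f (gradient f (y t)) (y t) :=
      (hf.differentiable one_ne_zero).differentiableAt.hasGradientAt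
    have := (hdf.hasFDerivAt).comp_hasDerivAt t (hy t)
    simpa [-toDual_gradient, InnerProductSpace.toDual_apply_apply] using this
  have hmono : Monotone (f ∘ y) := by
    apply monotone_of_deriv_nonneg
    · exact fun t => (hg t).differentiableAt
    · intro t
      rw [(hg t).deriv]
      exact real_inner_self_nonneg
  have hconst : ∀ t ∈ Icc (0 : ℝ) T, (f ∘ y) t = (f ∘ y) 0 := by
    intro t ht
    have h1 := hmono ht.1
    have h2 := hmono ht.2
    have : (f ∘ y) T = (f ∘ y) 0 := by simp [Function.comp, hper]
    linarith [this ▸ h2]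
  -- gradient vanishes on Ioo 0 T
  have hzero : ∀ t ∈ Ioo (0 : ℝ) T, G t = 0 := by
    intro t ht
    have hnhds : Icc (0 : ℝ) T ∈ nhds t := Icc_mem_nhds ht.1 ht.2
    have heq : (f ∘ y) =ᶠ[nhds t] fun _ => (f ∘ y) 0 :=
      Filter.eventuallyEq_of_mem hnhds fun s hs => hconst s hs
    have h0 : HasDerivAt (f ∘ y) 0 t :=
      (hasDerivAt_const t ((f ∘ y) 0)).congr_of_eventuallyEq heq
    have : (inner ℝ (G t) (G t) : ℝ) = 0 := by
      have := (hg t).unique h0; linarith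
    exact inner_self_eq_zero.mp this
  -- G continuous, hence zero on Icc = closure Ioo
  have hGcont : Continuous G := by
    have hfd : Continuous (fun x => fderiv ℝ f x) := hf.continuous_fderiv one_ne_zero
    have : Continuous fun t => (InnerProductSpace.toDual ℝ
        (EuclideanSpace ℝ (Fin n))).symm (fderiv ℝ f (y t)) := by
      exact (InnerProductSpace.toDual ℝ _).symm.continuous.comp
        (hfd.comp (continuous_iff_continuousAt.mpr (fun t => (hy t).continuousAt)))
    simpa [hG, gradient] using this
  have hzeroIcc : ∀ t ∈ Icc (0 : ℝ) T, G t = 0 := by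
    have hcl : Icc (0 : ℝ) T ⊆ closure (Ioo 0 T) := by
      rw [closure_Ioo hT.ne]
    intro t ht
    have : Set.EqOn G (fun _ => 0) (closure (Ioo 0 T)) :=
      Set.EqOn.closure (fun s hs => hzero s hs) hGcont continuous_const
    exact this (hcl ht)
  -- y has zero derivative on Icc, hence constant
  exact constant_of_has_deriv_right_zero (fun t ht => (hy t).continuousAt.continuousWithinAt)
    (fun t ht => by
      have h := (hy t).hasDerivWithinAt (s := Ici t)
      have hz : gradient f (y t) = 0 := hzeroIcc t (Ico_subset_Icc_self ht)
      rw [hz] at h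
      exact h)
end

section
/- Let ε ≠ 0 and a, b, c ∈ ℝ with a + c ≠ 0, and let f̃ : ℝ² → ℝ be the perturbed elliptic umbilic generating function f̃(y₁, y₂) = (1/3)y₁³ − y₁y₂² + (ε/2)(a y₁² + b y₁y₂ + c y₂²). Then the critical locus {(y₁, y₂) ∈ ℝ² : det Hess f̃(y₁, y₂) = 0} is exactly the circle with centre C = (−ε(a−c)/4, εb/4) and radius |ε(a+c)|/4, and consequently the caustic of f̃ is the image of this circle under the map ∇f̃(y₁, y₂) = (y₁² − y₂² + ε(a y₁ + (b/2) y₂), −2y₁y₂ + ε((b/2) y₁ + c y₂)). -/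
/-- The point of `ℝ²` (with the Euclidean norm) with coordinates `a`, `b`. -/
noncomputable def pt (a b : ℝ) : EuclideanSpace ℝ (Fin 2) :=
  (WithLp.equiv 2 (Fin 2 → ℝ)).symm ![a, b]

/-- The Hessian matrix of `f : ℝ² → ℝ` at `y`. -/
noncomputable def Hess (f : EuclideanSpace ℝ (Fin 2) → ℝ)
    (y : EuclideanSpace ℝ (Fin 2)) : Matrix (Fin 2) (Fin 2) ℝ :=
  Matrix.of fun i j =>
    fderiv ℝ (fun z => fderiv ℝ f z (EuclideanSpace.single j 1)) y (EuclideanSpace.single i 1)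

/-- The elliptic umbilic generating function perturbed by a quadratic form. -/
noncomputable def perturbedEllipticUmbilic (ε a b c : ℝ) :
    EuclideanSpace ℝ (Fin 2) → ℝ :=
  fun y => (1 / 3) * (y 0) ^ 3 - (y 0) * (y 1) ^ 2 +
    (ε / 2) * (a * (y 0) ^ 2 + b * (y 0) * (y 1) + c * (y 1) ^ 2)

/-- The Lagrangian map associated with the perturbed elliptic umbilic. -/
noncomputable def perturbedEllipticUmbilicMap (ε a b c : ℝ) :
    EuclideanSpace ℝ (Fin 2) → EuclideanSpace ℝ (Fin 2) :=
  fun y => pt ((y 0) ^ 2 - (y 1) ^ 2 + ε * (a * (y 0) + (b / 2) * (y 1)))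
    (-2 * (y 0) * (y 1) + ε * ((b / 2) * (y 0) + c * (y 1)))

@[simp] lemma pt_apply_zero (a b : ℝ) : pt a b 0 = a := by
  simp [pt, PiLp.toLp_apply]

@[simp] lemma pt_apply_one (a b : ℝ) : pt a b 1 = b := by
  simp [pt, PiLp.toLp_apply]

open EuclideanSpace in
lemma hasFDerivAt_pe (ε a b c : ℝ) (y : EuclideanSpace ℝ (Fin 2)) :
    HasFDerivAt (perturbedEllipticUmbilic ε a b c)
      ((((y 0) ^ 2 - (y 1) ^ 2 + ε * (a * (y 0) + (b / 2) * (y 1))) • proj (𝕜 := ℝ) (0 : Fin 2))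
        + ((-2 * (y 0) * (y 1) + ε * ((b / 2) * (y 0) + c * (y 1))) • proj (𝕜 := ℝ) (1 : Fin 2))) y := by
  have h0 : HasFDerivAt (fun z : EuclideanSpace ℝ (Fin 2) => z 0) (proj (𝕜 := ℝ) (0 : Fin 2)) y :=
    (proj (𝕜 := ℝ) (0 : Fin 2)).hasFDerivAt
  have h1 : HasFDerivAt (fun z : EuclideanSpace ℝ (Fin 2) => z 1) (proj (𝕜 := ℝ) (1 : Fin 2)) y :=
    (proj (𝕜 := ℝ) (1 : Fin 2)).hasFDerivAt
  have H := (((((h0.mul h0).mul h0).const_mul (1/3 : ℝ)).sub (h0.mul (h1.mul h1))).add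
    (((((h0.mul h0)).const_mul a).add (((h0.const_mul b).mul h1).add
      ((h1.mul h1).const_mul c))).const_mul (ε/2)))
  have hfun : perturbedEllipticUmbilic ε a b c = fun z : EuclideanSpace ℝ (Fin 2) =>
      (1/3 : ℝ) * (z 0 * z 0 * z 0) - z 0 * (z 1 * z 1) +
        (ε/2) * (a * (z 0 * z 0) + ((b * z 0) * z 1 + c * (z 1 * z 1))) := by
    funext z; simp only [perturbedEllipticUmbilic]; ring
  rw [hfun]
  refine H.congr_fderiv (ContinuousLinearMap.ext fun v => ?_)
  simp [PiLp.proj_apply]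
  ring

open EuclideanSpace in
lemma fderiv_pe_single0 (ε a b c : ℝ) (z : EuclideanSpace ℝ (Fin 2)) :
    fderiv ℝ (perturbedEllipticUmbilic ε a b c) z (EuclideanSpace.single 0 1) =
      z 0 * z 0 - z 1 * z 1 + ε * (a * z 0 + (b/2) * z 1) := by
  rw [(hasFDerivAt_pe ε a b c z).fderiv]
  simp [PiLp.proj_apply, EuclideanSpace.single_apply]
  ring

open EuclideanSpace in
lemma fderiv_pe_single1 (ε a b c : ℝ) (z : EuclideanSpace ℝ (Fin 2)) :
    fderiv ℝ (perturbedEllipticUmbilic ε a b c) z (EuclideanSpace.single 1 1) =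
      (-2 * z 0) * z 1 + ε * ((b/2) * z 0 + c * z 1) := by
  rw [(hasFDerivAt_pe ε a b c z).fderiv]
  simp [PiLp.proj_apply, EuclideanSpace.single_apply]

open EuclideanSpace in
lemma hasFDerivAt_g0 (ε a b : ℝ) (y : EuclideanSpace ℝ (Fin 2)) :
    HasFDerivAt (fun z : EuclideanSpace ℝ (Fin 2) =>
        z 0 * z 0 - z 1 * z 1 + ε * (a * z 0 + (b/2) * z 1))
      ((2 * y 0 + ε * a) • proj (𝕜 := ℝ) (0 : Fin 2)
        + (-2 * y 1 + ε * (b/2)) • proj (𝕜 := ℝ) (1 : Fin 2)) y := by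
  have h0 : HasFDerivAt (fun z : EuclideanSpace ℝ (Fin 2) => z 0) (proj (𝕜 := ℝ) (0 : Fin 2)) y :=
    (proj (𝕜 := ℝ) (0 : Fin 2)).hasFDerivAt
  have h1 : HasFDerivAt (fun z : EuclideanSpace ℝ (Fin 2) => z 1) (proj (𝕜 := ℝ) (1 : Fin 2)) y :=
    (proj (𝕜 := ℝ) (1 : Fin 2)).hasFDerivAt
  have H := ((h0.mul h0).sub (h1.mul h1)).add
    (((h0.const_mul a).add (h1.const_mul (b/2))).const_mul ε)
  refine H.congr_fderiv (ContinuousLinearMap.ext fun v => ?_)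
  simp [PiLp.proj_apply]
  ring

open EuclideanSpace in
lemma hasFDerivAt_g1 (ε b c : ℝ) (y : EuclideanSpace ℝ (Fin 2)) :
    HasFDerivAt (fun z : EuclideanSpace ℝ (Fin 2) =>
        (-2 * z 0) * z 1 + ε * ((b/2) * z 0 + c * z 1))
      ((-2 * y 1 + ε * (b/2)) • proj (𝕜 := ℝ) (0 : Fin 2)
        + (-2 * y 0 + ε * c) • proj (𝕜 := ℝ) (1 : Fin 2)) y := by
  have h0 : HasFDerivAt (fun z : EuclideanSpace ℝ (Fin 2) => z 0) (proj (𝕜 := ℝ) (0 : Fin 2)) y :=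
    (proj (𝕜 := ℝ) (0 : Fin 2)).hasFDerivAt
  have h1 : HasFDerivAt (fun z : EuclideanSpace ℝ (Fin 2) => z 1) (proj (𝕜 := ℝ) (1 : Fin 2)) y :=
    (proj (𝕜 := ℝ) (1 : Fin 2)).hasFDerivAt
  have H := ((h0.const_mul (-2 : ℝ)).mul h1).add
    (((h0.const_mul (b/2)).add (h1.const_mul c)).const_mul ε)
  refine H.congr_fderiv (ContinuousLinearMap.ext fun v => ?_)
  simp [PiLp.proj_apply]
  ring

lemma hess_det (ε a b c : ℝ) (y : EuclideanSpace ℝ (Fin 2)) :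
    (Hess (perturbedEllipticUmbilic ε a b c) y).det =
      (2 * y 0 + ε * a) * (-2 * y 0 + ε * c) - (-2 * y 1 + ε * (b/2)) ^ 2 := by
  have e0 : (fun z : EuclideanSpace ℝ (Fin 2) =>
      fderiv ℝ (perturbedEllipticUmbilic ε a b c) z (EuclideanSpace.single 0 1)) =
      fun z => z 0 * z 0 - z 1 * z 1 + ε * (a * z 0 + (b/2) * z 1) :=
    funext (fderiv_pe_single0 ε a b c)
  have e1 : (fun z : EuclideanSpace ℝ (Fin 2) =>
      fderiv ℝ (perturbedEllipticUmbilic ε a b c) z (EuclideanSpace.single 1 1)) =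
      fun z => (-2 * z 0) * z 1 + ε * ((b/2) * z 0 + c * z 1) :=
    funext (fderiv_pe_single1 ε a b c)
  simp only [Hess, Matrix.det_fin_two, Matrix.of_apply, e0, e1,
    (hasFDerivAt_g0 ε a b y).fderiv, (hasFDerivAt_g1 ε b c y).fderiv]
  simp [PiLp.proj_apply, EuclideanSpace.single_apply]
  ring

/-- For the perturbed elliptic umbilic
`f̃(y₁,y₂) = (1/3)y₁³ − y₁y₂² + (ε/2)(ay₁² + by₁y₂ + cy₂²)` with `ε ≠ 0` and
`a + c ≠ 0`: its Lagrangian map is `∇f̃`, the critical locus is exactly the circle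
with centre `C = (−ε(a−c)/4, εb/4)` and radius `|ε(a+c)|/4`, and the caustic is the
image of this circle under `∇f̃`. -/
theorem perturbedEllipticUmbilic_caustic (ε a b c : ℝ) (hε : ε ≠ 0)
    (hac : a + c ≠ 0) :
    (∀ y, gradient (perturbedEllipticUmbilic ε a b c) y =
        perturbedEllipticUmbilicMap ε a b c y) ∧
    {y | (Hess (perturbedEllipticUmbilic ε a b c) y).det = 0} =
      {y | ‖y - pt (-(ε * (a - c)) / 4) (ε * b / 4)‖ = |ε * (a + c)| / 4} ∧
    perturbedEllipticUmbilicMap ε a b c ''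
        {y | (Hess (perturbedEllipticUmbilic ε a b c) y).det = 0} =
      perturbedEllipticUmbilicMap ε a b c ''
        {y | ‖y - pt (-(ε * (a - c)) / 4) (ε * b / 4)‖ = |ε * (a + c)| / 4} := by
  have hgrad : ∀ y, gradient (perturbedEllipticUmbilic ε a b c) y =
      perturbedEllipticUmbilicMap ε a b c y := by
    intro y
    refine HasGradientAt.gradient ?_
    rw [hasGradientAt_iff_hasFDerivAt]
    refine (hasFDerivAt_pe ε a b c y).congr_fderiv (ContinuousLinearMap.ext fun v => ?_)
    simp [InnerProductSpace.toDual_apply_apply, PiLp.inner_apply, Fin.sum_univ_two,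
      RCLike.inner_apply, conj_trivial, PiLp.proj_apply, perturbedEllipticUmbilicMap]
    ring
  have hset : {y | (Hess (perturbedEllipticUmbilic ε a b c) y).det = 0} =
      {y | ‖y - pt (-(ε * (a - c)) / 4) (ε * b / 4)‖ = |ε * (a + c)| / 4} := by
    ext y
    have hr : (0:ℝ) ≤ |ε * (a + c)| / 4 := by positivity
    have hsq : ‖y - pt (-(ε * (a - c)) / 4) (ε * b / 4)‖ ^ 2 =
        (y 0 - -(ε * (a - c)) / 4) ^ 2 + (y 1 - ε * b / 4) ^ 2 := by
      rw [EuclideanSpace.norm_eq, Real.sq_sqrt (by positivity)]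
      simp [Fin.sum_univ_two, PiLp.sub_apply, sq_abs]
    simp only [Set.mem_setOf_eq, hess_det]
    rw [← sq_eq_sq₀ (norm_nonneg _) hr, hsq, div_pow, sq_abs]
    constructor <;> intro h
    · linear_combination (-1/4 : ℝ) * h
    · linear_combination (-4 : ℝ) * h
  exact ⟨hgrad, hset, by rw [hset]⟩
end
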